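/- Let α_1,…,α_r ∈ (1/N)ℤ² with coefficients m_1,…,m_r ∈ ℂ satisfying Σ m_s = 0 and Σ m_s α_s = 0 (as vectors in ℚ²). Then for each k ≥ 1 and each nonzero lattice point ℓ ∈ Z + Zτ of absolute value large relative to the α's, the inner sum Σ'_s m_s (ℓ + α_s)^{-k} is O(|ℓ|^{-k-2}); consequently the double sum Σ_{ℓ ∈ Z+Zτ} (Σ'_s m_s (ℓ + α_s)^{-k}) converges absolutely in ℓ for all k ≥ 1. -/

import Mathlib

open UpperHalfPlane

lemma e1aux (z a : ℂ) (hz : z ≠ 0) (hw : z + a ≠ 0) :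
    (z+a)⁻¹ - z⁻¹ = -a * ((z+a)⁻¹ * z⁻¹) := by
  field_simp
  ring

lemma Eident (n : ℕ) (z a : ℂ) (hz : z ≠ 0) (hw : z + a ≠ 0) :
    ((z+a)⁻¹)^(n+1) - (z⁻¹)^(n+1) + ((n:ℂ)+1) * a * (z⁻¹)^(n+2)
      = (z+a)⁻¹ * ((((z+a)⁻¹)^n - (z⁻¹)^n + (n:ℂ) * a * (z⁻¹)^(n+1))
          + ((n:ℂ)+1) * a^2 * (z⁻¹)^(n+2)) := by
  have e1 := e1aux z a hz hw
  linear_combination (1 - ((n:ℂ)+1)*a*z⁻¹) * (z⁻¹)^n * e1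

lemma Ebound (n : ℕ) (z a : ℂ) (hz : z ≠ 0) (hw : z + a ≠ 0)
    (h2 : ‖(z+a)⁻¹‖ ≤ 2 * ‖z‖⁻¹) :
    ‖((z+a)⁻¹)^n - (z⁻¹)^n + (n:ℂ) * a * (z⁻¹)^(n+1)‖
      ≤ 4^n * ‖a‖^2 * (‖z‖⁻¹)^(n+2) := by
  induction n with
  | zero => simp; positivity
  | succ n ih =>
    have hid := Eident n z a hz hw
    have hn1 : ‖((n:ℂ)+1) * a^2 * (z⁻¹)^(n+2)‖ = ((n:ℝ)+1) * ‖a‖^2 * (‖z‖⁻¹)^(n+2) := by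
      rw [norm_mul, norm_mul, norm_pow, norm_pow, norm_inv,
        show ((n:ℂ)+1) = ((n+1:ℕ):ℂ) by push_cast; ring, Complex.norm_natCast]
      push_cast; ring
    have key : 2*((4:ℝ)^n + ((n:ℝ)+1)) ≤ 4^(n+1) := by
      have h41 : (n:ℝ) + 1 ≤ 4^n := by
        have := Nat.lt_pow_self (n := n) (by norm_num : 1 < 4)
        exact_mod_cast Nat.succ_le_of_lt this
      rw [pow_succ]; nlinarith [pow_nonneg (by norm_num : (0:ℝ) ≤ 4) n]
    push_cast
    calc ‖((z+a)⁻¹)^(n+1) - (z⁻¹)^(n+1) + ((n:ℂ)+1) * a * (z⁻¹)^(n+1+1)‖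
        = ‖(z+a)⁻¹‖ * ‖(((z+a)⁻¹)^n - (z⁻¹)^n + (n:ℂ) * a * (z⁻¹)^(n+1))
            + ((n:ℂ)+1) * a^2 * (z⁻¹)^(n+2)‖ := by rw [show n+1+1 = n+2 from rfl, hid, norm_mul]
      _ ≤ (2 * ‖z‖⁻¹) * (4^n * ‖a‖^2 * (‖z‖⁻¹)^(n+2)
            + ((n:ℝ)+1) * ‖a‖^2 * (‖z‖⁻¹)^(n+2)) :=
          mul_le_mul h2 ((norm_add_le _ _).trans (add_le_add ih (le_of_eq hn1)))
            (norm_nonneg _) (by positivity)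
      _ = (2*((4:ℝ)^n + ((n:ℝ)+1))) * (‖a‖^2 * ((‖z‖⁻¹)^(n+2) * ‖z‖⁻¹)) := by ring
      _ ≤ 4^(n+1) * (‖a‖^2 * ((‖z‖⁻¹)^(n+2) * ‖z‖⁻¹)) := by gcongr
      _ = 4^(n+1) * ‖a‖^2 * (‖z‖⁻¹)^(n+1+2) := by ring

/-- Let `α_s = (i_s/N, j_s/N)` with coefficients `m_s ∈ ℂ` satisfying `Σ m_s = 0` and
`Σ m_s α_s = 0`.  Then the inner sum `Σ'_s m_s (ℓ + α_s)^{-k}` is `O(|ℓ|^{-k-2})` for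
lattice points `ℓ = a + bτ` of large absolute value, and consequently the double sum
`Σ_ℓ (Σ'_s m_s (ℓ + α_s)^{-k})` converges absolutely in `ℓ`, for every `k ≥ 1`.
(Terms with `ℓ + α_s = 0` are omitted; this is automatic since `(0:ℂ)^(-k) = 0`.) -/
theorem inner_sum_decay_and_summable
    (N : ℕ) (hN : 1 ≤ N) (r : ℕ) (i j : Fin r → ℤ) (m : Fin r → ℂ)
    (h0 : ∑ s, m s = 0)
    (h1 : ∑ s, m s * ((i s : ℂ) / N) = 0)
    (h2 : ∑ s, m s * ((j s : ℂ) / N) = 0)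
    (τ : ℍ) (k : ℕ) (hk : 1 ≤ k) :
    (∃ C R : ℝ, 0 < C ∧ 0 < R ∧ ∀ a b : ℤ, R ≤ ‖(a : ℂ) + (b : ℂ) * (τ : ℂ)‖ →
        ‖∑ s, m s * (((a : ℂ) + (b : ℂ) * (τ : ℂ))
            + ((i s : ℂ) + (j s : ℂ) * (τ : ℂ)) / N) ^ (-(k : ℤ))‖
          ≤ C * ‖(a : ℂ) + (b : ℂ) * (τ : ℂ)‖ ^ (-(k : ℤ) - 2)) ∧
    Summable fun ab : ℤ × ℤ =>
      ‖∑ s, m s * (((ab.1 : ℂ) + (ab.2 : ℂ) * (τ : ℂ))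
          + ((i s : ℂ) + (j s : ℂ) * (τ : ℂ)) / N) ^ (-(k : ℤ))‖ := by
  have hNc : (N : ℂ) ≠ 0 := Nat.cast_ne_zero.mpr (by omega)
  set α : Fin r → ℂ := fun s => ((i s : ℂ) + (j s : ℂ) * (τ : ℂ)) / N with hα
  -- Σ m_s α_s = 0
  have hα0 : ∑ s, m s * α s = 0 := by
    have hterm : ∀ s : Fin r, m s * α s
        = m s * ((i s : ℂ)/N) + (m s * ((j s : ℂ)/N)) * (τ : ℂ) := by
      intro s; rw [hα]; field_simp
    rw [Finset.sum_congr rfl fun s _ => hterm s, Finset.sum_add_distrib,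
      ← Finset.sum_mul, h1, h2]
    simp
  set A : ℝ := 1 + ∑ s, ‖α s‖ with hAdef
  have hA1 : 1 ≤ A :=
    le_add_of_nonneg_right (Finset.sum_nonneg fun s _ => norm_nonneg _)
  have hαA : ∀ s : Fin r, ‖α s‖ ≤ A := by
    intro s
    have := Finset.single_le_sum (f := fun s => ‖α s‖)
      (fun t _ => norm_nonneg _) (Finset.mem_univ s)
    simp only [hAdef]; linarith
  set B : ℝ := ∑ s, ‖m s‖ * ‖α s‖^2 with hBdef
  have hB0 : 0 ≤ B := Finset.sum_nonneg fun s _ => by positivity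
  set C : ℝ := 1 + 4^k * B with hCdef
  have hC0 : 0 < C := by positivity
  set R : ℝ := 2 * A with hRdef
  have hR0 : 0 < R := by simp only [hRdef]; linarith
  -- the main bound
  have main : ∀ a b : ℤ, R ≤ ‖(a : ℂ) + (b : ℂ) * (τ : ℂ)‖ →
      ‖∑ s, m s * (((a : ℂ) + (b : ℂ) * (τ : ℂ)) + α s) ^ (-(k : ℤ))‖
        ≤ C * ‖(a : ℂ) + (b : ℂ) * (τ : ℂ)‖ ^ (-(k : ℤ) - 2) := by
    intro a b hab
    set z : ℂ := (a : ℂ) + (b : ℂ) * (τ : ℂ) with hzdef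
    have hz0 : 0 < ‖z‖ := lt_of_lt_of_le hR0 hab
    have hz : z ≠ 0 := by intro h; rw [h, norm_zero] at hz0; exact lt_irrefl _ hz0
    have hzs : ∀ s : Fin r, ‖z‖/2 ≤ ‖z + α s‖ := by
      intro s
      have h1 : ‖z‖ ≤ ‖z + α s‖ + ‖α s‖ := by
        calc ‖z‖ = ‖(z + α s) + (-(α s))‖ := by congr 1; ring
          _ ≤ ‖z + α s‖ + ‖α s‖ := by simpa using norm_add_le (z + α s) (-(α s))
      have h2 : ‖α s‖ ≤ ‖z‖/2 := le_trans (hαA s) (by rw [hRdef] at hab; linarith)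
      linarith
    have hw : ∀ s : Fin r, z + α s ≠ 0 := by
      intro s h
      have := hzs s; rw [h, norm_zero] at this; linarith
    have hinv : ∀ s : Fin r, ‖(z + α s)⁻¹‖ ≤ 2 * ‖z‖⁻¹ := by
      intro s
      rw [norm_inv]
      have h2z : (0:ℝ) < ‖z‖/2 := by linarith
      calc ‖z + α s‖⁻¹ ≤ (‖z‖/2)⁻¹ := by
            exact inv_anti₀ h2z (hzs s)
        _ = 2 * ‖z‖⁻¹ := by field_simp
    -- rewrite zpow as pow of inverse
    have hrw : ∀ s : Fin r, (z + α s) ^ (-(k:ℤ)) = ((z + α s)⁻¹)^k := by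
      intro s; rw [zpow_neg, zpow_natCast, inv_pow]
    -- use the vanishing conditions
    have hsum : ∑ s, m s * ((z + α s)⁻¹)^k
        = ∑ s, m s * (((z + α s)⁻¹)^k - (z⁻¹)^k + (k:ℂ) * α s * (z⁻¹)^(k+1)) := by
      have expand : ∀ s : Fin r,
          m s * (((z + α s)⁻¹)^k - (z⁻¹)^k + (k:ℂ) * α s * (z⁻¹)^(k+1))
            = m s * ((z + α s)⁻¹)^k - m s * (z⁻¹)^k
              + (m s * α s) * ((k:ℂ) * (z⁻¹)^(k+1)) := fun s => by ring
      rw [Finset.sum_congr rfl fun s _ => expand s, Finset.sum_add_distrib,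
        Finset.sum_sub_distrib, ← Finset.sum_mul, ← Finset.sum_mul, h0, hα0]
      ring
    have hpow : ‖z‖ ^ (-(k:ℤ) - 2) = (‖z‖⁻¹)^(k+2) := by
      rw [show (-(k:ℤ) - 2) = -((k+2 : ℕ) : ℤ) by push_cast; ring,
        zpow_neg, zpow_natCast, inv_pow]
    calc ‖∑ s, m s * (z + α s) ^ (-(k:ℤ))‖
        = ‖∑ s, m s * (((z + α s)⁻¹)^k - (z⁻¹)^k + (k:ℂ) * α s * (z⁻¹)^(k+1))‖ := by
          rw [← hsum]; congr 1; exact Finset.sum_congr rfl fun s _ => by rw [hrw s]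
      _ ≤ ∑ s, ‖m s * (((z + α s)⁻¹)^k - (z⁻¹)^k + (k:ℂ) * α s * (z⁻¹)^(k+1))‖ :=
          norm_sum_le _ _
      _ ≤ ∑ s, ‖m s‖ * (4^k * ‖α s‖^2 * (‖z‖⁻¹)^(k+2)) := by
          refine Finset.sum_le_sum fun s _ => ?_
          rw [norm_mul]
          exact mul_le_mul_of_nonneg_left (Ebound k z (α s) hz (hw s) (hinv s))
            (norm_nonneg _)
      _ = 4^k * B * (‖z‖⁻¹)^(k+2) := by
          simp only [hBdef, Finset.mul_sum, Finset.sum_mul]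
          exact Finset.sum_congr rfl fun s _ => by ring
      _ ≤ C * (‖z‖⁻¹)^(k+2) := by
          have : (4:ℝ)^k * B ≤ C := by rw [hCdef]; linarith
          exact mul_le_mul_of_nonneg_right this (by positivity)
      _ = C * ‖z‖ ^ (-(k:ℤ) - 2) := by rw [hpow]
  refine ⟨⟨C, R, hC0, hR0, main⟩, ?_⟩
  -- summability
  have hrpos := EisensteinSeries.r_pos τ
  set S : Set (ℤ × ℤ) := {ab | ‖(ab.1 : ℂ) + (ab.2 : ℂ) * (τ : ℂ)‖ < R} with hSdef
  have hSfin : S.Finite := by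
    set c : ℤ := ⌈R / EisensteinSeries.r τ⌉ with hcdef
    have hc0 : (0:ℝ) < R / EisensteinSeries.r τ := div_pos hR0 hrpos
    apply Set.Finite.subset ((Set.finite_Icc (-c) c).prod (Set.finite_Icc (-c) c))
    rintro ⟨a, b⟩ hab
    have hbound : ((a.natAbs : ℝ) ≤ R / EisensteinSeries.r τ)
        ∧ ((b.natAbs : ℝ) ≤ R / EisensteinSeries.r τ) := by
      by_cases h0ab : (![b, a] : Fin 2 → ℤ) = 0
      · have ha : a = 0 := by
          have := congrFun h0ab 1; simpa using this
        have hb : b = 0 := by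
          have := congrFun h0ab 0; simpa using this
        simp [ha, hb, hc0.le]
      · have hle := EisensteinSeries.r_mul_max_le τ h0ab
        have hnorm : ‖(![b, a] : Fin 2 → ℤ)‖ = (max b.natAbs a.natAbs : ℕ) := by
          rw [EisensteinSeries.norm_eq_max_natAbs]; simp
        have habs : ‖(b : ℂ) * (τ : ℂ) + (a : ℂ)‖
            = ‖(a : ℂ) + (b : ℂ) * (τ : ℂ)‖ := by
          congr 1; ring
        have hlt : ‖(a : ℂ) + (b : ℂ) * (τ : ℂ)‖ < R := hab
        have hkey : EisensteinSeries.r τ * ‖(![b, a] : Fin 2 → ℤ)‖ < R := by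
          refine lt_of_le_of_lt ?_ hlt
          have := hle
          simpa [habs] using this
        have hmax : ‖(![b, a] : Fin 2 → ℤ)‖ ≤ R / EisensteinSeries.r τ := by
          rw [le_div_iff₀ hrpos]
          nlinarith [hkey]
        rw [hnorm] at hmax
        constructor
        · refine le_trans ?_ hmax
          push_cast
          exact_mod_cast Nat.cast_le.mpr (le_max_right b.natAbs a.natAbs)
        · refine le_trans ?_ hmax
          push_cast
          exact_mod_cast Nat.cast_le.mpr (le_max_left b.natAbs a.natAbs)
    have hca : |a| ≤ c := by
      rw [← @Int.cast_le ℝ, ← Nat.cast_natAbs]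
      exact le_trans hbound.1 (Int.le_ceil _)
    have hcb : |b| ≤ c := by
      rw [← @Int.cast_le ℝ, ← Nat.cast_natAbs]
      exact le_trans hbound.2 (Int.le_ceil _)
    obtain ⟨ha1, ha2⟩ := abs_le.mp hca
    obtain ⟨hb1, hb2⟩ := abs_le.mp hcb
    exact ⟨Set.mem_Icc.mpr ⟨ha1, ha2⟩, Set.mem_Icc.mpr ⟨hb1, hb2⟩⟩
  rw [← hSfin.summable_compl_iff]
  have hk2 : (2:ℝ) < (k:ℝ) + 2 := by
    have : (1:ℝ) ≤ (k:ℝ) := by exact_mod_cast hk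
    linarith
  have hs := EisensteinSeries.summable_one_div_norm_rpow hk2
  have hinj : Function.Injective
      (fun x : ↥Sᶜ => (![(x : ℤ × ℤ).2, (x : ℤ × ℤ).1] : Fin 2 → ℤ)) := by
    intro x y h
    have h0 := congrFun h 0
    have h1 := congrFun h 1
    simp only [Matrix.cons_val_zero, Matrix.cons_val_one, Matrix.head_cons] at h0 h1
    exact Subtype.ext (Prod.ext h1 h0)
  have hgsum : Summable fun x : ↥Sᶜ =>
      (C * EisensteinSeries.r τ ^ (-((k:ℝ) + 2)))
        * ‖(![(x : ℤ × ℤ).2, (x : ℤ × ℤ).1] : Fin 2 → ℤ)‖ ^ (-((k:ℝ) + 2)) :=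
    (hs.comp_injective hinj).mul_left _
  refine Summable.of_nonneg_of_le (fun x => norm_nonneg _) (fun x => ?_) hgsum
  obtain ⟨⟨a, b⟩, hx⟩ := x
  have hxR : R ≤ ‖(a : ℂ) + (b : ℂ) * (τ : ℂ)‖ := not_lt.mp hx
  have hz0 : (0:ℝ) < ‖(a : ℂ) + (b : ℂ) * (τ : ℂ)‖ := lt_of_lt_of_le hR0 hxR
  have hmain := main a b hxR
  have hrpow : ‖(a : ℂ) + (b : ℂ) * (τ : ℂ)‖ ^ (-(k:ℤ) - 2)
      = ‖(((![b, a] : Fin 2 → ℤ) 0 : ℤ) * (τ : ℂ)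
          + ((![b, a] : Fin 2 → ℤ) 1 : ℤ))‖ ^ (-((k:ℝ) + 2)) := by
    have habs : ‖(((![b, a] : Fin 2 → ℤ) 0 : ℤ) * (τ : ℂ)
        + ((![b, a] : Fin 2 → ℤ) 1 : ℤ))‖ = ‖(a : ℂ) + (b : ℂ) * (τ : ℂ)‖ := by
      simp only [Matrix.cons_val_zero, Matrix.cons_val_one, Matrix.head_cons]
      congr 1; ring
    rw [habs, show (-((k:ℝ) + 2)) = ((-(k:ℤ) - 2 : ℤ) : ℝ) by push_cast; ring,
      Real.rpow_intCast]
  have hsb := EisensteinSeries.summand_bound τ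
    (by positivity : (0:ℝ) ≤ (k:ℝ) + 2) (![b, a] : Fin 2 → ℤ)
  calc ‖∑ s, m s * (((a : ℂ) + (b : ℂ) * (τ : ℂ)) + α s) ^ (-(k : ℤ))‖
      ≤ C * ‖(a : ℂ) + (b : ℂ) * (τ : ℂ)‖ ^ (-(k:ℤ) - 2) := hmain
    _ = C * ‖(((![b, a] : Fin 2 → ℤ) 0 : ℤ) * (τ : ℂ)
          + ((![b, a] : Fin 2 → ℤ) 1 : ℤ))‖ ^ (-((k:ℝ) + 2)) := by rw [hrpow]
    _ ≤ C * (EisensteinSeries.r τ ^ (-((k:ℝ) + 2))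
          * ‖(![b, a] : Fin 2 → ℤ)‖ ^ (-((k:ℝ) + 2))) :=
        mul_le_mul_of_nonneg_left hsb hC0.le
    _ = (C * EisensteinSeries.r τ ^ (-((k:ℝ) + 2)))
          * ‖(![b, a] : Fin 2 → ℤ)‖ ^ (-((k:ℝ) + 2)) := by ring
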